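/- Let A be a noetherian integral domain and f : M → N an injective homomorphism of finitely generated A-modules. Then there exists a nonzero element a ∈ A such that for every maximal ideal m of the localization A_a, the induced map f ⊗ κ(m) : M ⊗_A κ(m) → N ⊗_A κ(m) on fibers is injective, where κ(m) = A_a/m. -/

import Mathlib

set_option maxHeartbeats 1000000
set_option synthInstance.maxHeartbeats 400000

open TensorProduct

/-- Auxiliary: if `g : M → N` over `R` admits a retraction, then its base change
to any `R`-algebra is injective. Here we only need the composition statement. -/
private lemma aux_retraction_baseChange_injective
    {R : Type*} [CommRing R] {M N : Type*}
    [AddCommGroup M] [Module R M] [AddCommGroup N] [Module R N]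
    (g : M →ₗ[R] N) (l : N →ₗ[R] M) (hl : ∀ x, l (g x) = x)
    (S : Type*) [CommRing S] [Algebra R S] :
    Function.Injective (LinearMap.baseChange S g) := by
  have key : ∀ x : S ⊗[R] M,
      (LinearMap.baseChange S l) (LinearMap.baseChange S g x) = x := by
    intro x
    induction x using TensorProduct.induction_on with
    | zero => simp
    | tmul s m => simp [hl]
    | add x y hx hy => simp [map_add, hx, hy]
  exact Function.LeftInverse.injective key

/-- Let `A` be a noetherian integral domain and `f : M → N` an
injective homomorphism of finitely generated `A`-modules.  Then there is a nonzero
`a ∈ A` such that for every maximal ideal `m` of `A_a = Localization.Away a`, the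
induced map on fibers `f ⊗ κ(m) : M ⊗ κ(m) → N ⊗ κ(m)` (with `κ(m) = A_a/m`)
is injective. -/
theorem stmt_13 {A : Type*} [CommRing A] [IsDomain A] [IsNoetherianRing A]
    {M N : Type*} [AddCommGroup M] [Module A M] [AddCommGroup N] [Module A N]
    [Module.Finite A M] [Module.Finite A N]
    (f : M →ₗ[A] N) (hf : Function.Injective f) :
    ∃ a : A, a ≠ 0 ∧ ∀ (m : Ideal (Localization.Away a)), m.IsMaximal →
      Function.Injective (LinearMap.baseChange ((Localization.Away a) ⧸ m) f) := by
  classical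
  -- the cokernel
  set Q := N ⧸ LinearMap.range f with hQ
  have : Module.FinitePresentation A Q := Module.finitePresentation_of_finite A Q
  -- generic freeness via finite presentation
  obtain ⟨r, hr, hfree, -⟩ :=
    Module.FinitePresentation.exists_free_localizedModule_powers (nonZeroDivisors A)
      (LocalizedModule.mkLinearMap (nonZeroDivisors A) Q) (FractionRing A)
  refine ⟨r, nonZeroDivisors.ne_zero hr, ?_⟩
  intro m hm
  set R := Localization.Away r with hR
  -- transfer freeness to `R ⊗[A] Q`
  have hblc : IsLocalizedModule (Submonoid.powers r) (TensorProduct.mk A R Q 1) :=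
    (isLocalizedModule_iff_isBaseChange (Submonoid.powers r) R _).mpr
      (TensorProduct.isBaseChange A Q R)
  let e0 : LocalizedModule (Submonoid.powers r) Q ≃ₗ[A] R ⊗[A] Q :=
    IsLocalizedModule.iso (Submonoid.powers r) (TensorProduct.mk A R Q 1)
  let e : LocalizedModule (Submonoid.powers r) Q ≃ₗ[R] R ⊗[A] Q :=
    { __ := e0,
      map_smul' := by
        intro c x
        obtain ⟨⟨c, s⟩, rfl⟩ := IsLocalization.mk'_surjective (Submonoid.powers r) c
        apply ((Module.End.isUnit_iff _).mp
          (IsLocalizedModule.map_units (TensorProduct.mk A R Q 1) s)).1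
        simp only [RingHom.id_apply, Module.algebraMap_end_apply]
        show (s : A) • e0 (IsLocalization.mk' R c s • x)
            = (s : A) • IsLocalization.mk' R c s • e0 x
        have h1 : (s : A) • IsLocalization.mk' R c s • x = c • x := by
          rw [← smul_assoc, IsLocalization.smul_mk'_self, algebraMap_smul]
        have h2 : (s : A) • IsLocalization.mk' R c s • e0 x = c • e0 x := by
          rw [← smul_assoc, IsLocalization.smul_mk'_self, algebraMap_smul]
        rw [← map_smul, h1, h2, map_smul] }
  have hfreeR : Module.Free R (R ⊗[A] Q) := Module.Free.of_equiv e
  haveI := hfreeR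
  haveI hprojR : Module.Projective R (R ⊗[A] Q) := inferInstance
  -- the base-changed exact sequence over R
  set g : R ⊗[A] M →ₗ[R] R ⊗[A] N := f.baseChange R with hg
  set p : R ⊗[A] N →ₗ[R] R ⊗[A] Q := (LinearMap.range f).mkQ.baseChange R with hp
  have hginj : Function.Injective g := by
    rw [hg, LinearMap.baseChange_eq_ltensor]
    exact Module.Flat.lTensor_preserves_injective_linearMap (M := R) f hf
  have hpsurj : Function.Surjective p := by
    rw [hp, LinearMap.baseChange_eq_ltensor]
    exact LinearMap.lTensor_surjective R (Submodule.mkQ_surjective _)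
  have hexact : Function.Exact g p := by
    rw [hg, hp, LinearMap.baseChange_eq_ltensor, LinearMap.baseChange_eq_ltensor]
    exact lTensor_exact R (LinearMap.exact_map_mkQ_range f) (Submodule.mkQ_surjective _)
  -- split the sequence
  obtain ⟨s, hs⟩ := Module.projective_lifting_property p LinearMap.id hpsurj
  set X := hexact.splitSurjectiveEquiv hginj ⟨s, hs⟩ with hX
  set eq := X.1 with heqdef
  have heq1 := X.2.1
  -- retraction of g
  set l : R ⊗[A] N →ₗ[R] R ⊗[A] M := LinearMap.fst R _ _ ∘ₗ eq.toLinearMap with hl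
  have hlg : ∀ x, l (g x) = x := by
    intro x
    have : g x = eq.symm (x, 0) := by
      rw [heq1]; rfl
    simp [hl, this]
  -- now base change the retraction to κ(m)
  set κ := R ⧸ m with hκ
  have hinj2 : Function.Injective (LinearMap.baseChange κ g) :=
    aux_retraction_baseChange_injective g l hlg κ
  -- relate `baseChange κ f` (over A) with `baseChange κ g` (over R) via cancelBaseChange
  let cM : κ ⊗[R] (R ⊗[A] M) ≃ₗ[κ] κ ⊗[A] M :=
    AlgebraTensorModule.cancelBaseChange A R κ κ M
  let cN : κ ⊗[R] (R ⊗[A] N) ≃ₗ[κ] κ ⊗[A] N :=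
    AlgebraTensorModule.cancelBaseChange A R κ κ N
  have hcomm : ∀ x : κ ⊗[A] M,
      (LinearMap.baseChange κ f) x = cN (LinearMap.baseChange κ g (cM.symm x)) := by
    intro x
    induction x using TensorProduct.induction_on with
    | zero => simp
    | tmul c x =>
        simp [cM, cN, AlgebraTensorModule.cancelBaseChange_symm_tmul,
          AlgebraTensorModule.cancelBaseChange_tmul, hg]
    | add x y hx hy => simp [map_add, hx, hy]
  intro x y hxy
  rw [hcomm x, hcomm y] at hxy
  have := hinj2 (cN.injective hxy)
  exact cM.symm.injective this
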